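/- With the hypotheses of the approximation lemma (sequence P_n/Q_n with |Q_n| < |Q_{n+1}| ≤ c₀|Q_n|^θ and c₁/|Q_n|^{1+ρ} ≤ |f − P_n/Q_n| ≤ c₂/|Q_n|^{1+δ}, 0 < δ ≤ ρ, θ ≥ 1), assume additionally that there exists N such that gcd(P_n, Q_n) = 1 for all n ≥ N. Then 1 + δ ≤ μ(f) ≤ max(1 + ρ, 1 + θ/δ). In particular, if ρ = δ and θ ≤ δ², then μ(f) = 1 + δ. -/

import Mathlib

open Polynomial LaurentSeries
open scoped Classical

/-- The absolute value `|f| = |T|^{-i₀}` on `F((T⁻¹))`, where `i₀` is the order of `f`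
as a Hahn series in `T⁻¹` and `t = |T| > 1` is fixed; `|0| = 0`. -/
noncomputable def lAbs {F : Type*} [Field F] (t : ℝ) (f : LaurentSeries F) : ℝ :=
  if f = 0 then 0 else t ^ (-f.order)

/-- The image of a polynomial `P(T)` in the field of Laurent series in `T⁻¹`:
the polynomial variable `T` is sent to the inverse of the Hahn-series variable. -/
noncomputable def polyLS {F : Type*} [Field F] (P : Polynomial F) : LaurentSeries F :=
  Polynomial.aeval (HahnSeries.single (-1 : ℤ) (1 : F)) P

section Inf
variable {F : Type*} [Field F] {t : ℝ}

lemma lAbs_zero : lAbs t (0 : LaurentSeries F) = 0 := if_pos rfl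

lemma lAbs_of_ne {f : LaurentSeries F} (hf : f ≠ 0) : lAbs t f = t ^ (-f.order) := if_neg hf

lemma lAbs_nonneg (ht : 0 < t) (f : LaurentSeries F) : 0 ≤ lAbs t f := by
  unfold lAbs; split
  · exact le_rfl
  · exact (zpow_pos ht _).le

lemma lAbs_pos (ht : 0 < t) {f : LaurentSeries F} (hf : f ≠ 0) : 0 < lAbs t f := by
  rw [lAbs_of_ne hf]; exact zpow_pos ht _

lemma lAbs_mul (ht : 0 < t) (f g : LaurentSeries F) :
    lAbs t (f * g) = lAbs t f * lAbs t g := by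
  by_cases hf : f = 0
  · simp [hf, lAbs_zero]
  by_cases hg : g = 0
  · simp [hg, lAbs_zero]
  rw [lAbs_of_ne hf, lAbs_of_ne hg, lAbs_of_ne (mul_ne_zero hf hg),
    HahnSeries.order_mul hf hg, neg_add, zpow_add₀ ht.ne']

lemma lAbs_neg (f : LaurentSeries F) : lAbs t (-f) = lAbs t f := by
  by_cases hf : f = 0
  · simp [hf, lAbs_zero]
  rw [lAbs_of_ne (neg_ne_zero.mpr hf), lAbs_of_ne hf, HahnSeries.order_neg]

lemma lAbs_add_le (ht : 1 < t) (f g : LaurentSeries F) :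
    lAbs t (f + g) ≤ max (lAbs t f) (lAbs t g) := by
  have ht0 : 0 < t := lt_trans one_pos ht
  by_cases hfg : f + g = 0
  · rw [hfg, lAbs_zero]
    exact le_max_of_le_left (lAbs_nonneg ht0 f)
  by_cases hf : f = 0
  · simp [hf] at hfg ⊢
  by_cases hg : g = 0
  · simp [hg]
  rw [lAbs_of_ne hfg, lAbs_of_ne hf, lAbs_of_ne hg]
  have := HahnSeries.min_order_le_order_add hfg
  rcases min_le_iff.mp this with h | h
  · exact le_max_of_le_left (zpow_le_zpow_right₀ ht.le (neg_le_neg h))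
  · exact le_max_of_le_right (zpow_le_zpow_right₀ ht.le (neg_le_neg h))

lemma lAbs_add_eq_right (ht : 1 < t) {f g : LaurentSeries F} (h : lAbs t f < lAbs t g) :
    lAbs t (f + g) = lAbs t g := by
  have h1 : lAbs t (f + g) ≤ lAbs t g := by
    have := lAbs_add_le ht f g
    rwa [max_eq_right h.le] at this
  refine le_antisymm h1 ?_
  have h2 : lAbs t g ≤ max (lAbs t (f + g)) (lAbs t f) := by
    have := lAbs_add_le ht (f + g) (-f)
    rw [lAbs_neg] at this
    simpa using this
  rcases max_le_iff.mp (le_refl (max (lAbs t (f+g)) (lAbs t f))) with _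
  rcases le_max_iff.mp h2 with h3 | h3
  · exact h3
  · exact absurd h3 (not_le.mpr h)

lemma lAbs_div (ht : 0 < t) (f g : LaurentSeries F) :
    lAbs t (f / g) = lAbs t f / lAbs t g := by
  by_cases hg : g = 0
  · simp [hg, lAbs_zero]
  have : f / g * g = f := div_mul_cancel₀ f hg
  have h2 := lAbs_mul ht (f / g) g
  rw [this] at h2
  field_simp [h2, (lAbs_pos ht hg).ne']
  exact h2.symm

lemma polyLS_eq_sum (P : Polynomial F) :
    polyLS P = ∑ i ∈ P.support, HahnSeries.single (-(i : ℤ)) (P.coeff i) := by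
  rw [polyLS, Polynomial.aeval_def, Polynomial.eval₂_eq_sum, Polynomial.sum]
  refine Finset.sum_congr rfl fun i _ => ?_
  rw [HahnSeries.single_pow]
  rw [show (algebraMap F (HahnSeries ℤ F)) (P.coeff i)
      = HahnSeries.ofPowerSeries ℤ F (PowerSeries.C (P.coeff i)) from rfl,
    HahnSeries.ofPowerSeries_C, HahnSeries.C_apply, HahnSeries.single_mul_single]
  norm_num

lemma coeff_polyLS (P : Polynomial F) (i : ℕ) :
    (polyLS P).coeff (-(i : ℤ)) = P.coeff i := by
  classical
  rw [polyLS_eq_sum]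
  rw [show ((∑ k ∈ P.support, HahnSeries.single (-(k : ℤ)) (P.coeff k)) : LaurentSeries F).coeff (-(i:ℤ))
      = ∑ k ∈ P.support, (HahnSeries.single (-(k : ℤ)) (P.coeff k)).coeff (-(i:ℤ)) from by
    induction P.support using Finset.induction with
    | empty => simp
    | insert a s h ih => simp [Finset.sum_insert h, ih]]
  simp only [HahnSeries.coeff_single, neg_inj, Nat.cast_inj]
  rw [Finset.sum_ite_eq P.support i (fun k => P.coeff k)]
  split
  · rfl
  · next h => exact (Polynomial.notMem_support_iff.mp h).symm

lemma coeff_polyLS_of_lt (P : Polynomial F) {j : ℤ} (hj : j < -(P.natDegree : ℤ)) :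
    (polyLS P).coeff j = 0 := by
  classical
  rw [polyLS_eq_sum]
  rw [show ((∑ k ∈ P.support, HahnSeries.single (-(k : ℤ)) (P.coeff k)) : LaurentSeries F).coeff j
      = ∑ k ∈ P.support, (HahnSeries.single (-(k : ℤ)) (P.coeff k)).coeff j from by
    induction P.support using Finset.induction with
    | empty => simp
    | insert a s h ih => simp [Finset.sum_insert h, ih]]
  refine Finset.sum_eq_zero fun k hk => ?_
  rw [HahnSeries.coeff_single_of_ne]
  intro hjk
  rw [hjk] at hj
  have : (k:ℤ) ≤ (P.natDegree : ℤ) := by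
    exact_mod_cast Polynomial.le_natDegree_of_mem_supp k hk
  omega

end Inf

section Inf2
variable {F : Type*} [Field F] {t : ℝ}

lemma polyLS_ne_zero {P : Polynomial F} (hP : P ≠ 0) : polyLS P ≠ 0 := by
  have h : (polyLS P).coeff (-(P.natDegree : ℤ)) ≠ 0 := by
    rw [coeff_polyLS]
    exact Polynomial.leadingCoeff_ne_zero.mpr hP
  exact HahnSeries.ne_zero_of_coeff_ne_zero h

lemma order_polyLS {P : Polynomial F} (hP : P ≠ 0) :
    (polyLS P).order = -(P.natDegree : ℤ) := by
  refine le_antisymm ?_ ?_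
  · apply HahnSeries.order_le_of_coeff_ne_zero
    rw [coeff_polyLS]
    exact Polynomial.leadingCoeff_ne_zero.mpr hP
  · by_contra h
    push_neg at h
    exact HahnSeries.coeff_order_eq_zero.not.2 (polyLS_ne_zero hP) (coeff_polyLS_of_lt P h)

lemma lAbs_polyLS (ht : 0 < t) {P : Polynomial F} (hP : P ≠ 0) :
    lAbs t (polyLS P) = t ^ P.natDegree := by
  rw [lAbs_of_ne (polyLS_ne_zero hP), order_polyLS hP, neg_neg, zpow_natCast]

lemma one_le_lAbs_polyLS (ht : 1 < t) {P : Polynomial F} (hP : P ≠ 0) :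
    1 ≤ lAbs t (polyLS P) := by
  rw [lAbs_polyLS (lt_trans one_pos ht) hP]
  exact one_le_pow₀ ht.le

lemma lAbs_polyLS_lt_iff (ht : 1 < t) {P Q : Polynomial F} (hP : P ≠ 0) (hQ : Q ≠ 0) :
    lAbs t (polyLS P) < lAbs t (polyLS Q) ↔ P.natDegree < Q.natDegree := by
  have ht0 : 0 < t := lt_trans one_pos ht
  rw [lAbs_polyLS ht0 hP, lAbs_polyLS ht0 hQ, pow_lt_pow_iff_right₀ ht]

lemma lAbs_polyLS_le_iff (ht : 1 < t) {P Q : Polynomial F} (hP : P ≠ 0) (hQ : Q ≠ 0) :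
    lAbs t (polyLS P) ≤ lAbs t (polyLS Q) ↔ P.natDegree ≤ Q.natDegree := by
  have ht0 : 0 < t := lt_trans one_pos ht
  rw [lAbs_polyLS ht0 hP, lAbs_polyLS ht0 hQ, pow_le_pow_iff_right₀ ht]

end Inf2
section Main
variable {F : Type*} [Field F]

lemma polyLS_mul (a b : Polynomial F) : polyLS (a * b) = polyLS a * polyLS b :=
  map_mul (Polynomial.aeval _) a b

lemma polyLS_sub (a b : Polynomial F) : polyLS (a - b) = polyLS a - polyLS b :=
  map_sub (Polynomial.aeval _) a b

lemma rpow_bound {y a ε : ℝ} (hy : 0 < y) (hε : 0 < ε) (h : y ^ ε < a) : y ≤ a ^ ε⁻¹ := by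
  have h1 : (y ^ ε) ^ ε⁻¹ ≤ a ^ ε⁻¹ :=
    Real.rpow_le_rpow (Real.rpow_nonneg hy.le ε) h.le (inv_nonneg.mpr hε.le)
  rwa [← Real.rpow_mul hy.le, mul_inv_cancel₀ hε.ne', Real.rpow_one] at h1

lemma finite_natDegree_le [Fintype F] (d : ℕ) :
    {Q : Polynomial F | Q.natDegree ≤ d}.Finite := by
  classical
  apply Set.Finite.of_finite_image (f := fun Q : Polynomial F => fun i : Fin (d + 1) => Q.coeff i)
  · exact Set.Finite.subset (Set.finite_univ) (Set.subset_univ _)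
  · intro Q1 h1 Q2 h2 h
    ext i
    by_cases hi : i ≤ d
    · exact congrFun h ⟨i, by omega⟩
    · rw [Polynomial.coeff_eq_zero_of_natDegree_lt (lt_of_le_of_lt h1 (by omega)),
        Polynomial.coeff_eq_zero_of_natDegree_lt (lt_of_le_of_lt h2 (by omega))]

end Main

/-- The irrationality exponent `μ(f)`: the supremum of the real numbers `τ` for which
`|f - P/Q| < |Q|^{-τ}` has infinitely many solutions `(P, Q) ∈ F_q[T]²`, `Q ≠ 0`. -/
noncomputable def irrExp {F : Type*} [Field F] (t : ℝ) (f : LaurentSeries F) : ℝ :=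
  sSup {τ : ℝ | {PQ : Polynomial F × Polynomial F | PQ.2 ≠ 0 ∧
    lAbs t (f - polyLS PQ.1 / polyLS PQ.2) < (lAbs t (polyLS PQ.2)) ^ (-τ)}.Infinite}

/-- The approximation lemma with the coprimality assumption: if moreover
`gcd(P_n, Q_n) = 1` for all large `n`, then `1 + δ ≤ μ(f) ≤ max(1 + ρ, 1 + θ/δ)`;
in particular if `ρ = δ` and `θ ≤ δ²` then `μ(f) = 1 + δ`. -/
theorem approximation_lemma_coprime
    (p e q : ℕ) (hp : p.Prime) (he : 1 ≤ e) (hq : q = p ^ e)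
    (F : Type*) [Field F] [Fintype F] (hcard : Fintype.card F = q)
    (t : ℝ) (ht : 1 < t)
    (f : LaurentSeries F) (δ ρ θ : ℝ) (hδ : 0 < δ) (hδρ : δ ≤ ρ) (hθ : 1 ≤ θ)
    (c₀ c₁ c₂ : ℝ) (hc₀ : 0 < c₀) (hc₁ : 0 < c₁) (hc₂ : 0 < c₂)
    (P Q : ℕ → Polynomial F) (hQ : ∀ n ≥ 1, Q n ≠ 0)
    (hgrow : ∀ n ≥ 1, lAbs t (polyLS (Q n)) < lAbs t (polyLS (Q (n + 1))) ∧
      lAbs t (polyLS (Q (n + 1))) ≤ c₀ * lAbs t (polyLS (Q n)) ^ θ)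
    (happrox : ∀ n ≥ 1,
      c₁ / lAbs t (polyLS (Q n)) ^ (1 + ρ) ≤ lAbs t (f - polyLS (P n) / polyLS (Q n)) ∧
      lAbs t (f - polyLS (P n) / polyLS (Q n)) ≤ c₂ / lAbs t (polyLS (Q n)) ^ (1 + δ))
    (hcop : ∃ N : ℕ, ∀ n ≥ N, IsCoprime (P n) (Q n)) :
    (1 + δ ≤ irrExp t f ∧ irrExp t f ≤ max (1 + ρ) (1 + θ / δ)) ∧
      (ρ = δ → θ ≤ δ ^ 2 → irrExp t f = 1 + δ) := by
  classical
  have ht0 : (0:ℝ) < t := lt_trans one_pos ht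
  set M : ℝ := max (1 + ρ) (1 + θ / δ) with hM
  set S : Set ℝ := {τ : ℝ | {PQ : Polynomial F × Polynomial F | PQ.2 ≠ 0 ∧
    lAbs t (f - polyLS PQ.1 / polyLS PQ.2) < (lAbs t (polyLS PQ.2)) ^ (-τ)}.Infinite} with hS
  have hirr : irrExp t f = sSup S := rfl
  -- basic facts about the |Q n|
  have hxval : ∀ n ≥ 1, lAbs t (polyLS (Q n)) = t ^ (Q n).natDegree :=
    fun n hn => lAbs_polyLS ht0 (hQ n hn)
  have hx1 : ∀ n ≥ 1, 1 ≤ lAbs t (polyLS (Q n)) :=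
    fun n hn => one_le_lAbs_polyLS ht (hQ n hn)
  have hx0 : ∀ n ≥ 1, 0 < lAbs t (polyLS (Q n)) :=
    fun n hn => lt_of_lt_of_le one_pos (hx1 n hn)
  have hdeglt : ∀ n ≥ 1, (Q n).natDegree < (Q (n + 1)).natDegree := fun n hn =>
    (lAbs_polyLS_lt_iff ht (hQ n hn) (hQ (n + 1) (by omega))).mp (hgrow n hn).1
  have hdegmono : ∀ m n, 1 ≤ m → m < n → (Q m).natDegree < (Q n).natDegree := by
    intro m n hm hmn
    induction n, hmn using Nat.le_induction with
    | base => exact hdeglt m hm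
    | succ n hn ih => exact lt_trans ih (hdeglt n (by omega))
  have hdegn : ∀ n ≥ 1, n - 1 ≤ (Q n).natDegree := by
    intro n hn
    induction n, hn using Nat.le_induction with
    | base => omega
    | succ n hn ih => have := hdeglt n hn; omega
  have hxge : ∀ n ≥ 1, t ^ (n - 1) ≤ lAbs t (polyLS (Q n)) := by
    intro n hn
    rw [hxval n hn]
    exact pow_le_pow_right₀ ht.le (hdegn n hn)
  -- |Q n|^η exceeds any bound for n large
  have hbig : ∀ η : ℝ, 0 < η → ∀ C : ℝ, ∃ n₀ : ℕ, 1 ≤ n₀ ∧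
      ∀ n ≥ n₀, C < lAbs t (polyLS (Q n)) ^ η := by
    intro η hη C
    obtain ⟨m, hm⟩ := pow_unbounded_of_one_lt C ht
    refine ⟨max 1 (⌈(m : ℝ) / η⌉₊ + 1), le_max_left _ _, fun n hn => ?_⟩
    have hn1 : 1 ≤ n := le_trans (le_max_left _ _) hn
    have hucel : (⌈(m : ℝ) / η⌉₊ : ℝ) ≥ (m : ℝ) / η := Nat.le_ceil _
    have hge : (m : ℝ) ≤ ((n - 1 : ℕ) : ℝ) * η := by
      have h2 : (⌈(m : ℝ) / η⌉₊ : ℝ) ≤ ((n - 1 : ℕ) : ℝ) := by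
        have : ⌈(m : ℝ) / η⌉₊ ≤ n - 1 := by
          have := le_trans (le_max_right 1 (⌈(m : ℝ) / η⌉₊ + 1)) hn
          omega
        exact_mod_cast this
      have := le_trans hucel h2
      rw [div_le_iff₀ hη] at this
      linarith [Nat.le_ceil ((m:ℝ)/η)]
    calc C < t ^ m := hm
      _ = t ^ ((m : ℕ) : ℝ) := (Real.rpow_natCast t m).symm
      _ ≤ t ^ (((n - 1 : ℕ) : ℝ) * η) := Real.rpow_le_rpow_of_exponent_le ht.le hge
      _ = (t ^ (n - 1 : ℕ)) ^ η := by
          rw [Real.rpow_mul ht0.le, Real.rpow_natCast]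
      _ ≤ lAbs t (polyLS (Q n)) ^ η :=
          Real.rpow_le_rpow (pow_nonneg ht0.le _) (hxge n hn1) hη.le
  -- lower bound: every τ < 1 + δ is in S
  have hmem : ∀ τ : ℝ, τ < 1 + δ → τ ∈ S := by
    intro τ hτ
    obtain ⟨n₀, hn₀1, hn₀⟩ := hbig (1 + δ - τ) (by linarith) c₂
    refine Set.infinite_of_injective_forall_mem
      (f := fun k : ℕ => (P (n₀ + k), Q (n₀ + k))) ?_ ?_
    · intro a b hab
      by_contra hne
      have hQab : Q (n₀ + a) = Q (n₀ + b) := congrArg Prod.snd hab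
      rcases lt_trichotomy a b with h | h | h
      · exact absurd (congrArg Polynomial.natDegree hQab)
          (Nat.ne_of_lt (hdegmono _ _ (by omega) (by omega)))
      · exact hne h
      · exact absurd (congrArg Polynomial.natDegree hQab).symm
          (Nat.ne_of_lt (hdegmono _ _ (by omega) (by omega)))
    · intro k
      have hk1 : 1 ≤ n₀ + k := by omega
      refine ⟨hQ _ hk1, ?_⟩
      have h1 := (happrox _ hk1).2
      have h2 := hn₀ (n₀ + k) (by omega)
      set y := lAbs t (polyLS (Q (n₀ + k))) with hy
      have hy0 : 0 < y := hx0 _ hk1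
      have key : c₂ / y ^ (1 + δ) < y ^ (-τ) := by
        rw [div_lt_iff₀ (Real.rpow_pos_of_pos hy0 _)]
        calc c₂ < y ^ (1 + δ - τ) := h2
          _ = y ^ (-τ) * y ^ (1 + δ) := by
            rw [← Real.rpow_add hy0]; ring_nf
      exact lt_of_le_of_lt h1 key
  -- upper bound : for τ > M the solution set is finite
  have hfin : ∀ τ : ℝ, M < τ →
      {PQ : Polynomial F × Polynomial F | PQ.2 ≠ 0 ∧
        lAbs t (f - polyLS PQ.1 / polyLS PQ.2) < (lAbs t (polyLS PQ.2)) ^ (-τ)}.Finite := by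
    intro τ hτM
    have hτρ : 1 + ρ < τ := lt_of_le_of_lt (le_max_left _ _) hτM
    have hτθ : 1 + θ / δ < τ := lt_of_le_of_lt (le_max_right _ _) hτM
    have hτ1 : 1 < τ := by linarith
    obtain ⟨N, hN⟩ := hcop
    set n₁ : ℕ := max N 1 with hn₁
    have hn₁1 : 1 ≤ n₁ := le_max_right _ _
    set X : ℝ := lAbs t (polyLS (Q n₁)) with hX
    have hX0 : 0 < X := hx0 _ hn₁1
    set K : ℝ := c₀ * c₂ ^ (θ / δ) with hK
    have hθδ : 0 < θ / δ := div_pos (by linarith) hδ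
    set B : ℝ := max (max (X ^ (τ - 1)⁻¹) (K ^ (τ - 1 - θ/δ)⁻¹)) ((1/c₁) ^ (τ - 1 - ρ)⁻¹)
      with hB
    have hsol : ∀ Pp Qq : Polynomial F, Qq ≠ 0 →
        lAbs t (f - polyLS Pp / polyLS Qq) < (lAbs t (polyLS Qq)) ^ (-τ) →
        lAbs t (polyLS Qq) ≤ B := by
      intro Pp Qq hQq hlt
      set y : ℝ := lAbs t (polyLS Qq) with hy
      have hy1 : 1 ≤ y := one_le_lAbs_polyLS ht hQq
      have hy0 : 0 < y := lt_of_lt_of_le one_pos hy1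
      obtain ⟨n₀, hn₀1, hn₀⟩ := hbig δ hδ (c₂ * y)
      have hex : ∃ n, n₁ ≤ n ∧ c₂ * y < lAbs t (polyLS (Q n)) ^ δ :=
        ⟨max n₀ n₁, le_max_right _ _, hn₀ _ (le_max_left _ _)⟩
      obtain ⟨hk₁, hk₂⟩ := Nat.find_spec hex
      set k := Nat.find hex with hkdef
      have hk1 : 1 ≤ k := le_trans hn₁1 hk₁
      have hkN : N ≤ k := le_trans (le_max_left _ _) hk₁
      set x : ℝ := lAbs t (polyLS (Q k)) with hxk
      have hxx1 : 1 ≤ x := hx1 _ hk1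
      have hxx0 : 0 < x := hx0 _ hk1
      have hxB : x ≤ max X (c₀ * (c₂ * y) ^ (θ / δ)) := by
        rcases eq_or_lt_of_le hk₁ with h | h
        · rw [hxk, ← h]; exact le_max_left _ _
        · have hkm1 : n₁ ≤ k - 1 := by omega
          have hkm11 : 1 ≤ k - 1 := le_trans hn₁1 hkm1
          have hmin := Nat.find_min hex (m := k - 1) (by omega)
          push_neg at hmin
          have hle : lAbs t (polyLS (Q (k-1))) ^ δ ≤ c₂ * y := hmin hkm1
          have hkk : k - 1 + 1 = k := by omega
          have hg := (hgrow (k - 1) hkm11).2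
          rw [hkk] at hg
          have hxm0 : (0:ℝ) ≤ lAbs t (polyLS (Q (k-1))) := (hx0 _ hkm11).le
          have h2 : lAbs t (polyLS (Q (k-1))) ^ θ
              = (lAbs t (polyLS (Q (k-1))) ^ δ) ^ (θ/δ) := by
            rw [← Real.rpow_mul hxm0]
            congr 1
            field_simp
          have h3 : (lAbs t (polyLS (Q (k-1))) ^ δ) ^ (θ/δ) ≤ (c₂ * y) ^ (θ/δ) :=
            Real.rpow_le_rpow (Real.rpow_nonneg hxm0 _) hle hθδ.le
          refine le_max_of_le_right ?_
          calc x ≤ c₀ * lAbs t (polyLS (Q (k-1))) ^ θ := hg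
            _ = c₀ * (lAbs t (polyLS (Q (k-1))) ^ δ) ^ (θ/δ) := by rw [h2]
            _ ≤ c₀ * (c₂ * y) ^ (θ/δ) := mul_le_mul_of_nonneg_left h3 hc₀.le
      by_cases hcase : Pp * Q k = P k * Qq
      · -- the rational approximations coincide
        have hdvd : Q k ∣ Qq := by
          have h1 : Q k ∣ P k * Qq := ⟨Pp, by rw [← hcase]; ring⟩
          exact (hN k hkN).symm.dvd_of_dvd_mul_left h1
        have hxy : x ≤ y := (lAbs_polyLS_le_iff ht (hQ k hk1) hQq).mpr
          (Polynomial.natDegree_le_of_dvd hdvd hQq)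
        have heqf : polyLS (P k) / polyLS (Q k) = polyLS Pp / polyLS Qq := by
          rw [div_eq_div_iff (polyLS_ne_zero (hQ k hk1)) (polyLS_ne_zero hQq),
            ← polyLS_mul, ← polyLS_mul, hcase]
        have h1 := (happrox k hk1).1
        rw [heqf] at h1
        have hxyρ : x ^ (1+ρ) ≤ y ^ (1+ρ) := Real.rpow_le_rpow hxx0.le hxy (by linarith)
        have h2 : c₁ / y ^ (1+ρ) ≤ c₁ / x ^ (1+ρ) :=
          div_le_div_of_nonneg_left hc₁.le (Real.rpow_pos_of_pos hxx0 _) hxyρ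
        have h3 : c₁ / y ^ (1+ρ) < y ^ (-τ) := lt_of_le_of_lt (le_trans h2 h1) hlt
        rw [div_lt_iff₀ (Real.rpow_pos_of_pos hy0 _)] at h3
        rw [← Real.rpow_add hy0] at h3
        have h4 : c₁ < y ^ (1 + ρ - τ) := by
          rwa [show -τ + (1+ρ) = 1+ρ-τ by ring] at h3
        have h5 : y ^ (τ - 1 - ρ) < 1/c₁ := by
          rw [show τ-1-ρ = -(1+ρ-τ) by ring, Real.rpow_neg hy0.le, one_div]
          exact inv_strictAnti₀ hc₁ h4
        exact le_trans (rpow_bound hy0 (by linarith) h5) (le_max_right _ _)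
      · -- distinct rational approximations
        have hGne : P k * Qq - Q k * Pp ≠ 0 := by
          intro h
          rw [sub_eq_zero] at h
          exact hcase (by rw [mul_comm Pp (Q k), ← h])
        set R := polyLS (P k) / polyLS (Q k) - polyLS Pp / polyLS Qq with hR
        have hRval : R = polyLS (P k * Qq - Q k * Pp) / polyLS (Q k * Qq) := by
          rw [hR, div_sub_div _ _ (polyLS_ne_zero (hQ k hk1)) (polyLS_ne_zero hQq),
            ← polyLS_mul, ← polyLS_mul, ← polyLS_mul, ← polyLS_sub]
        have hRabs : 1 / (x * y) ≤ lAbs t R := by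
          rw [hRval, lAbs_div ht0, polyLS_mul, lAbs_mul ht0]
          have h1 : 1 ≤ lAbs t (polyLS (P k * Qq - Q k * Pp)) := one_le_lAbs_polyLS ht hGne
          have h2 : 0 < x * y := mul_pos hxx0 hy0
          gcongr
        have ha : lAbs t (f - polyLS (P k) / polyLS (Q k)) < 1 / (x * y) := by
          have h1 := (happrox k hk1).2
          have h2 : c₂ / x ^ (1 + δ) < 1 / (x * y) := by
            rw [div_lt_div_iff₀ (Real.rpow_pos_of_pos hxx0 _) (mul_pos hxx0 hy0)]
            have hxe : x ^ ((1:ℝ)+δ) = x * x ^ δ := by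
              rw [Real.rpow_add hxx0, Real.rpow_one]
            rw [one_mul, hxe]
            calc c₂ * (x * y) = x * (c₂ * y) := by ring
              _ < x * x ^ δ := mul_lt_mul_of_pos_left hk₂ hxx0
          exact lt_of_le_of_lt h1 h2
        have haR : lAbs t (f - polyLS Pp / polyLS Qq) = lAbs t R := by
          have hsum : f - polyLS Pp / polyLS Qq = (f - polyLS (P k) / polyLS (Q k)) + R := by
            rw [hR]; ring
          rw [hsum]
          exact lAbs_add_eq_right ht (lt_of_lt_of_le ha hRabs)
        have hkey : 1 / (x * y) < y ^ (-τ) := by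
          calc 1 / (x * y) ≤ lAbs t R := hRabs
            _ = lAbs t (f - polyLS Pp / polyLS Qq) := haR.symm
            _ < y ^ (-τ) := hlt
        have hyτ : y ^ (τ - 1) < x := by
          rw [Real.rpow_neg hy0.le, ← one_div] at hkey
          have h2 : y ^ τ < x * y :=
            lt_of_one_div_lt_one_div (mul_pos hxx0 hy0) hkey
          have h3 : y ^ (τ - 1) = y ^ τ / y := by
            rw [Real.rpow_sub hy0, Real.rpow_one]
          rw [h3, div_lt_iff₀ hy0]
          exact h2
        rcases le_max_iff.mp hxB with h | h
        · have h1 : y ^ (τ-1) < X := lt_of_lt_of_le hyτ h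
          exact le_trans (rpow_bound hy0 (by linarith) h1)
            (le_max_of_le_left (le_max_left _ _))
        · have h4 : y ^ (τ-1) < c₀ * (c₂ ^ (θ/δ) * y ^ (θ/δ)) := by
            rw [← Real.mul_rpow hc₂.le hy0.le]
            exact lt_of_lt_of_le hyτ h
          have h5 : y ^ (τ - 1 - θ/δ) < K := by
            rw [Real.rpow_sub hy0, div_lt_iff₀ (Real.rpow_pos_of_pos hy0 _)]
            calc y ^ (τ-1) < c₀ * (c₂ ^ (θ/δ) * y ^ (θ/δ)) := h4
              _ = K * y ^ (θ/δ) := by rw [hK]; ring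
          exact le_trans (rpow_bound hy0 (by linarith) h5)
            (le_max_of_le_left (le_max_right _ _))
    obtain ⟨d, hd⟩ := pow_unbounded_of_one_lt B ht
    apply Set.Finite.of_finite_image (f := Prod.snd)
    · apply Set.Finite.subset (finite_natDegree_le d)
      rintro Qq ⟨⟨Pp, Qq'⟩, ⟨h1, h2⟩, rfl⟩
      have hB1 := hsol Pp Qq' h1 h2
      rw [lAbs_polyLS ht0 h1] at hB1
      have hdlt : (Qq').natDegree < d := by
        by_contra hcon
        push_neg at hcon
        have := pow_le_pow_right₀ ht.le hcon
        change t ^ d ≤ t ^ Qq'.natDegree at this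
        linarith
      exact le_of_lt hdlt
    · rintro ⟨P1, Q1⟩ h1 ⟨P2, Q2⟩ h2 hQeq
      simp only [Set.mem_setOf_eq] at h1 h2
      obtain ⟨h11, h12⟩ := h1
      obtain ⟨h21, h22⟩ := h2
      simp only at hQeq
      have hP : P1 = P2 := by
        by_contra hne
        set y := lAbs t (polyLS Q1) with hy
        have hy1 : 1 ≤ y := one_le_lAbs_polyLS ht h11
        have hy0 : 0 < y := lt_of_lt_of_le one_pos hy1
        have hD : P1 - P2 ≠ 0 := sub_ne_zero.mpr hne
        have hdiff : polyLS P1 / polyLS Q1 - polyLS P2 / polyLS Q1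
            = polyLS (P1 - P2) / polyLS Q1 := by rw [div_sub_div_same, polyLS_sub]
        have hlb : 1 / y ≤ lAbs t (polyLS (P1 - P2) / polyLS Q1) := by
          rw [lAbs_div ht0]
          have h1 : 1 ≤ lAbs t (polyLS (P1 - P2)) := one_le_lAbs_polyLS ht hD
          gcongr
        have hub2 : lAbs t (polyLS P1 / polyLS Q1 - polyLS P2 / polyLS Q1) < y ^ (-τ) := by
          have hsub : polyLS P1 / polyLS Q1 - polyLS P2 / polyLS Q1
              = (f - polyLS P2 / polyLS Q1) + (-(f - polyLS P1 / polyLS Q1)) := by ring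
          rw [hsub]
          refine lt_of_le_of_lt (lAbs_add_le ht _ _) ?_
          rw [lAbs_neg]
          apply max_lt
          · rw [← hQeq] at h22
            exact h22
          · exact h12
        have hτy : y ^ (-τ) ≤ 1 / y := by
          calc y ^ (-τ) ≤ y ^ (-1:ℝ) :=
              Real.rpow_le_rpow_of_exponent_le hy1 (by linarith)
            _ = 1 / y := by rw [Real.rpow_neg hy0.le, Real.rpow_one, one_div]
        rw [hdiff] at hub2
        have := lt_of_le_of_lt hlb hub2
        have := lt_of_lt_of_le this hτy
        exact lt_irrefl _ this
      exact Prod.ext hP hQeq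
  have hub : ∀ τ ∈ S, τ ≤ M := by
    intro τ hτ
    by_contra h
    push_neg at h
    exact hτ (hfin τ h)
  have hbdd : BddAbove S := ⟨M, hub⟩
  have hne : S.Nonempty := ⟨δ, hmem δ (by linarith)⟩
  have hupper : irrExp t f ≤ M := by rw [hirr]; exact csSup_le hne hub
  have hlower : 1 + δ ≤ irrExp t f := by
    rw [hirr]
    refine le_of_forall_pos_le_add fun ε hε => ?_
    have h1 : 1 + δ - ε ≤ sSup S := le_csSup hbdd (hmem _ (by linarith))
    linarith
  refine ⟨⟨hlower, hupper⟩, fun hρδ hθδ => ?_⟩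
  have hMeq : M = 1 + δ := by
    rw [hM, hρδ, max_eq_left]
    have : θ / δ ≤ δ := by
      rw [div_le_iff₀ hδ]; nlinarith [sq_nonneg δ]
    linarith
  exact le_antisymm (hMeq ▸ hupper) hlower
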